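/- Let A and B be p×p matrices and define the 2p×2p block matrix G = [[A, B],[0, A]]. Then for any t ≥ 0, exp(Gt) = [[exp(At), C(t)],[0, exp(At)]] where C(t) = ∫₀ᵗ exp(A(t-u)) B exp(Au) du. -/

import Mathlib

open Matrix NormedSpace

/-- Uniqueness of solutions of the linear matrix ODE `f' = G f`, `f 0 = 1`:
any such solution equals `exp (t • G)`. -/
theorem van_loan_exp_unique {𝔸 : Type*} [NormedRing 𝔸] [NormedAlgebra ℝ 𝔸] [CompleteSpace 𝔸]
    (G : 𝔸) (f : ℝ → 𝔸) (h0 : f 0 = 1)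
    (hf : ∀ s, HasDerivAt f (G * f s) s) (t : ℝ) : f t = exp (t • G) := by
  have key : ∀ s : ℝ, exp (s • (-G)) * f s = 1 := by
    have hderiv : ∀ s : ℝ, HasDerivAt (fun s : ℝ => exp (s • (-G)) * f s) 0 s := by
      intro s
      have h1 := (hasDerivAt_exp_smul_const (𝕂 := ℝ) (-G) s).mul (hf s)
      convert h1 using 1
      · funext u; simp [smul_neg]
      · simp [mul_neg, neg_mul, mul_assoc]
    have hconst := is_const_of_deriv_eq_zero
      (fun s => (hderiv s).differentiableAt) (fun s => (hderiv s).deriv)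
    intro s
    calc exp (s • (-G)) * f s = exp ((0 : ℝ) • (-G)) * f 0 := hconst s 0
      _ = 1 := by simp [h0, exp_zero]
  have hinv : exp (t • G) * exp (t • (-G)) = 1 := by
    rw [smul_neg, ← NormedSpace.exp_add_of_commute_of_mem_ball (𝕂 := ℝ) (Commute.refl (t • G)).neg_right
      ((NormedSpace.expSeries_radius_eq_top ℝ (𝔸)).symm ▸ edist_lt_top _ _) ((NormedSpace.expSeries_radius_eq_top ℝ (𝔸)).symm ▸ edist_lt_top _ _)]
    simp
  calc f t = (exp (t • G) * exp (t • (-G))) * f t := by rw [hinv, one_mul]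
    _ = exp (t • G) * (exp (t • (-G)) * f t) := by rw [mul_assoc]
    _ = exp (t • G) := by rw [key t, mul_one]

set_option maxHeartbeats 1000000

/-- Van Loan's formula: For `p×p` matrices `A, B` and the `2p×2p` block
matrix `G = [[A, B], [0, A]]`, we have, for every `t ≥ 0`,
`exp(G t) = [[exp(A t), C(t)], [0, exp(A t)]]` where
`C(t) = ∫₀ᵗ exp(A(t-u)) B exp(A u) du`. -/
theorem van_loan_block_exponential
    {p : ℕ} (A B : Matrix (Fin p) (Fin p) ℝ) (t : ℝ) (ht : 0 ≤ t) :
    NormedSpace.exp (t • Matrix.fromBlocks A B 0 A)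
      = Matrix.fromBlocks (NormedSpace.exp (t • A))
          (Matrix.of fun i j =>
            ∫ u in (0 : ℝ)..t,
              (NormedSpace.exp ((t - u) • A) * B * NormedSpace.exp (u • A)) i j)
          0 (NormedSpace.exp (t • A)) := by
  letI : NormedRing (Matrix (Fin p) (Fin p) ℝ) := Matrix.linftyOpNormedRing
  letI : NormedAlgebra ℝ (Matrix (Fin p) (Fin p) ℝ) := Matrix.linftyOpNormedAlgebra
  letI : NormedRing (Matrix (Fin p ⊕ Fin p) (Fin p ⊕ Fin p) ℝ) := Matrix.linftyOpNormedRing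
  letI : NormedAlgebra ℝ (Matrix (Fin p ⊕ Fin p) (Fin p ⊕ Fin p) ℝ) :=
    Matrix.linftyOpNormedAlgebra
  letI : CompleteSpace (Matrix (Fin p) (Fin p) ℝ) := FiniteDimensional.complete ℝ _
  letI : CompleteSpace (Matrix (Fin p ⊕ Fin p) (Fin p ⊕ Fin p) ℝ) :=
    FiniteDimensional.complete ℝ _
  set Gm : Matrix (Fin p ⊕ Fin p) (Fin p ⊕ Fin p) ℝ := Matrix.fromBlocks A B 0 A with hGm
  have h1cont : Continuous (fun u : ℝ => exp (u • A)) :=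
    continuous_iff_continuousAt.2 fun u =>
      (hasDerivAt_exp_smul_const' (𝕂 := ℝ) A u).continuousAt
  have h2cont : Continuous (fun u : ℝ => exp (-(u • A))) := by
    have := continuous_iff_continuousAt.2 fun u =>
      (hasDerivAt_exp_smul_const' (𝕂 := ℝ) (-A) u).continuousAt
    refine this.congr fun u => ?_
    simp only [smul_neg]
    rfl
  have hφcont0 : Continuous (fun u : ℝ => exp (-(u • A)) * B * exp (u • A)) :=
    (h2cont.mul continuous_const).mul h1cont
  set E : ℝ → (Matrix (Fin p) (Fin p) ℝ) := fun s => exp (s • A) with hEdef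
  set φ : ℝ → (Matrix (Fin p) (Fin p) ℝ) := fun u => exp (-(u • A)) * B * exp (u • A) with hφdef
  have hφcont : Continuous φ := hφcont0
  set D : ℝ → (Matrix (Fin p) (Fin p) ℝ) := fun s => ∫ u in (0 : ℝ)..s, φ u with hDdef
  haveI : TopologicalSpace.PseudoMetrizableSpace (Matrix (Fin p) (Fin p) ℝ) :=
    inferInstanceAs (TopologicalSpace.PseudoMetrizableSpace (Fin p → Fin p → ℝ))
  have hD : ∀ s : ℝ, HasDerivAt D (φ s) s := fun s =>
    intervalIntegral.integral_hasDerivAt_right (hφcont.intervalIntegrable _ _)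
      (hφcont.stronglyMeasurable.stronglyMeasurableAtFilter) hφcont.continuousAt
  have hE : ∀ s : ℝ, HasDerivAt E (A * E s) s := fun s => hasDerivAt_exp_smul_const' A s
  -- the continuous linear embeddings of the blocks
  let J : (Matrix (Fin p) (Fin p) ℝ) →L[ℝ] Matrix (Fin p ⊕ Fin p) (Fin p ⊕ Fin p) ℝ :=
    LinearMap.toContinuousLinearMap
      { toFun := fun M => Matrix.fromBlocks M 0 0 M
        map_add' := fun M N => by simp [Matrix.fromBlocks_add]
        map_smul' := fun c M => by simp [Matrix.fromBlocks_smul] }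
  let K : (Matrix (Fin p) (Fin p) ℝ) →L[ℝ] Matrix (Fin p ⊕ Fin p) (Fin p ⊕ Fin p) ℝ :=
    LinearMap.toContinuousLinearMap
      { toFun := fun M => Matrix.fromBlocks 0 M 0 0
        map_add' := fun M N => by simp [Matrix.fromBlocks_add]
        map_smul' := fun c M => by simp [Matrix.fromBlocks_smul] }
  have hJK : ∀ X Y : (Matrix (Fin p) (Fin p) ℝ), J X + K Y = Matrix.fromBlocks X Y 0 X := by
    intro X Y
    show Matrix.fromBlocks X 0 0 X + Matrix.fromBlocks 0 Y 0 0 = _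
    simp [Matrix.fromBlocks_add]
  set f : ℝ → Matrix (Fin p ⊕ Fin p) (Fin p ⊕ Fin p) ℝ :=
    fun s => J (E s) + K (E s * D s) with hfdef
  have hinv : ∀ s : ℝ, exp (s • A) * exp (-(s • A)) = 1 := by
    intro s
    rw [← Matrix.exp_add_of_commute _ _ (Commute.refl (s • A)).neg_right]
    simp
  have hEφ : ∀ s : ℝ, E s * φ s = B * E s := by
    intro s
    show exp (s • A) * (exp (-(s • A)) * B * exp (s • A)) = B * exp (s • A)
    rw [← mul_assoc, ← mul_assoc, hinv s, one_mul]
  have hf : ∀ s : ℝ, HasDerivAt f (Gm * f s) s := by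
    intro s
    have h1 : HasDerivAt (fun s => E s * D s) (A * E s * D s + E s * φ s) s :=
      (hE s).mul (hD s)
    have h2 := (J.hasFDerivAt.comp_hasDerivAt s (hE s)).add
      (K.hasFDerivAt.comp_hasDerivAt s h1)
    convert h2 using 1
    show Gm * (J (E s) + K (E s * D s)) = J (A * E s) + K (A * E s * D s + E s * φ s)
    rw [hJK, hJK, hGm, Matrix.fromBlocks_multiply, hEφ s]
    congr 1 <;> simp [mul_assoc]
    all_goals rfl
  have h0 : f 0 = 1 := by
    have hE0 : E 0 = 1 := by simp [hEdef, exp_zero]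
    have hD0 : D 0 = 0 := by simp [hDdef]
    rw [hfdef]
    simp only [hE0, hD0, mul_zero, map_zero, add_zero]
    show Matrix.fromBlocks 1 0 0 1 = 1
    exact Matrix.fromBlocks_one
  have huniq := van_loan_exp_unique Gm f h0 hf t
  have hL := (ContinuousLinearMap.mul ℝ (Matrix (Fin p) (Fin p) ℝ) (E t)).intervalIntegral_comp_comm
    (hφcont.intervalIntegrable (μ := MeasureTheory.volume) 0 t)
  simp only [ContinuousLinearMap.mul_apply'] at hL
  have hcom : ∀ u : ℝ, exp (t • A) * exp (-(u • A)) = exp ((t - u) • A) := by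
    intro u
    rw [← Matrix.exp_add_of_commute _ _ (((Commute.refl A).smul_left t).smul_right u).neg_right]
    congr 1
    rw [sub_smul, sub_eq_add_neg]
  have hφeq : ∀ u : ℝ, E t * φ u = exp ((t - u) • A) * B * exp (u • A) := by
    intro u
    show exp (t • A) * (exp (-(u • A)) * B * exp (u • A)) = _
    rw [← mul_assoc, ← mul_assoc, hcom u]
  have h2 : E t * D t = ∫ u in (0 : ℝ)..t, exp ((t - u) • A) * B * exp (u • A) := by
    rw [← hL]
    exact intervalIntegral.integral_congr fun u _ => hφeq u
  have hcont2 : Continuous fun u : ℝ => exp ((t - u) • A) * B * exp (u • A) := by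
    have h3cont : Continuous (fun u : ℝ => exp ((t - u) • A)) :=
      h1cont.comp (continuous_const.sub continuous_id)
    exact (h3cont.mul continuous_const).mul h1cont
  have hmid : E t * D t = Matrix.of (fun i j =>
      ∫ u in (0 : ℝ)..t, (exp ((t - u) • A) * B * exp (u • A)) i j) := by
    rw [h2]
    ext i j
    let ε : Matrix (Fin p) (Fin p) ℝ →L[ℝ] ℝ :=
      LinearMap.toContinuousLinearMap (Matrix.entryLinearMap ℝ ℝ i j)
    have hint := hcont2.intervalIntegrable (μ := MeasureTheory.volume) 0 t
    have h3 := ε.intervalIntegral_comp_comm (𝕜 := ℝ) hint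
    exact h3.symm
  refine huniq.symm.trans ?_
  rw [hfdef]
  show J (E t) + K (E t * D t) = _
  rw [hJK, hmid]
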